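/- Let n, m be unit vectors in ℝ³ with n·m = cos θ > 0, n ≠ ±m. If a = n (so D(E^{1,a}, E^{1,n}) = 0) and E^{1,n}, E^{1,b} are jointly measurable, then (1/2)‖b − m‖ ≥ (1/2)sin θ, with equality attained for b = (cos θ)n. -/

import Mathlib

noncomputable section

open Matrix
open scoped RealInnerProductSpace ComplexOrder

abbrev V3 := EuclideanSpace ℝ (Fin 3)

def σ1 : Matrix (Fin 2) (Fin 2) ℂ := !![0, 1; 1, 0]
def σ2 : Matrix (Fin 2) (Fin 2) ℂ := !![0, -Complex.I; Complex.I, 0]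
def σ3 : Matrix (Fin 2) (Fin 2) ℂ := !![1, 0; 0, -1]

def dotSigma (a : V3) : Matrix (Fin 2) (Fin 2) ℂ :=
  (a 0 : ℂ) • σ1 + (a 1 : ℂ) • σ2 + (a 2 : ℂ) • σ3

def Amat (α : ℝ) (a : V3) : Matrix (Fin 2) (Fin 2) ℂ :=
  (2⁻¹ : ℂ) • ((α : ℂ) • (1 : Matrix (Fin 2) (Fin 2) ℂ) + dotSigma a)

def matLE (A B : Matrix (Fin 2) (Fin 2) ℂ) : Prop := (B - A).PosSemidef

def IsEffectM (A : Matrix (Fin 2) (Fin 2) ℂ) : Prop := matLE 0 A ∧ matLE A 1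

def JMeff (A B : Matrix (Fin 2) (Fin 2) ℂ) : Prop :=
  ∃ G, matLE 0 G ∧ matLE G A ∧ matLE G B ∧ matLE (A + B - 1) G

def cross3 (a b : V3) : V3 :=
  WithLp.toLp 2 ![a 1 * b 2 - a 2 * b 1, a 2 * b 0 - a 0 * b 2, a 0 * b 1 - a 1 * b 0]

def opNormM (M : Matrix (Fin 2) (Fin 2) ℂ) : ℝ :=
  ‖(Matrix.toEuclideanCLM (𝕜 := ℂ) (n := Fin 2) M : EuclideanSpace ℂ (Fin 2) →L[ℂ] EuclideanSpace ℂ (Fin 2))‖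

lemma dotSigma_eq (a : V3) : dotSigma a =
    !![(a 2 : ℂ), (a 0 : ℂ) - (a 1 : ℂ)*Complex.I; (a 0 : ℂ) + (a 1 : ℂ)*Complex.I, -(a 2 : ℂ)] := by
  ext i j
  fin_cases i <;> fin_cases j <;> simp [dotSigma, σ1, σ2, σ3] <;> ring

lemma dotSigma_herm (a : V3) : (dotSigma a).IsHermitian := by
  rw [dotSigma_eq]
  ext i j
  fin_cases i <;> fin_cases j <;> simp [conjTranspose_apply, Complex.ext_iff]

lemma det_aux (a : V3) (c : ℂ) : (dotSigma a - c • (1 : Matrix (Fin 2) (Fin 2) ℂ)).det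
    = c ^ 2 - ((a 0 : ℂ)^2 + (a 1 : ℂ)^2 + (a 2 : ℂ)^2) := by
  rw [dotSigma_eq]
  simp [Matrix.det_fin_two, one_apply]
  linear_combination ((a 1 : ℂ)^2) * Complex.I_sq

lemma norm_sq_V3 (a : V3) : a 0 ^ 2 + a 1 ^ 2 + a 2 ^ 2 = ‖a‖ ^ 2 := by
  rw [EuclideanSpace.norm_eq, Real.sq_sqrt (by positivity)]
  simp [Fin.sum_univ_three, sq_abs]

-- eigenvector existence
lemma exists_eigvec (n : V3) (hn : ‖n‖ = 1) (c : ℝ) (hc : c^2 = 1) :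
    ∃ u : Fin 2 → ℂ, u ≠ 0 ∧ dotSigma n *ᵥ u = (c:ℂ) • u := by
  have hdet : (dotSigma n - (c:ℂ) • (1 : Matrix (Fin 2) (Fin 2) ℂ)).det = 0 := by
    rw [det_aux]
    have : ((n 0 : ℂ)^2 + (n 1 : ℂ)^2 + (n 2 : ℂ)^2) = ((n 0^2 + n 1^2 + n 2^2 : ℝ) : ℂ) := by
      push_cast; ring
    rw [this, norm_sq_V3, hn]
    have : ((c:ℂ))^2 = ((c^2 : ℝ) : ℂ) := by push_cast; ring
    rw [this, hc]
    simp
  obtain ⟨u, hu, huv⟩ := (Matrix.exists_mulVec_eq_zero_iff).mpr hdet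
  refine ⟨u, hu, ?_⟩
  have := huv
  rw [Matrix.sub_mulVec, Matrix.smul_mulVec, Matrix.one_mulVec, sub_eq_zero] at this
  exact this

lemma quad_key (r p q u v a0 a1 a2 : ℝ) (hr : 0 ≤ r) (ha : a0 ^ 2 + a1 ^ 2 + a2 ^ 2 ≤ 1) :
    0 ≤
    r * a2 * p ^ 2 + r * a2 * q ^ 2 + (-(r * a2 * u ^ 2) - r * a2 * v ^ 2) + r * p * u * a0 * 2 + r * p * v * a1 * 2 +
              (r * p ^ 2 - r * q * u * a1 * 2) +
            r * q * v * a0 * 2 +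
          r * q ^ 2 +
        r * u ^ 2 +
      r * v ^ 2 := by
  set S := p^2+q^2+u^2+v^2 with hS
  set X := p^2+q^2-u^2-v^2 with hX
  set Y := 2*(p*u+q*v) with hY
  set Z := 2*(p*v-q*u) with hZ
  set T := a2*X + a0*Y + a1*Z with hT
  have h1 : X^2+Y^2+Z^2 = S^2 := by rw [hX, hY, hZ, hS]; ring
  have h2 : T^2 ≤ (a0^2+a1^2+a2^2) * (X^2+Y^2+Z^2) := by
    rw [hT]
    nlinarith [sq_nonneg (a0*Z - a1*Y), sq_nonneg (a0*X - a2*Y), sq_nonneg (a1*X - a2*Z)]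
  have h4 : 0 ≤ S := by rw [hS]; positivity
  have h3 : T^2 ≤ S^2 := by nlinarith
  have h5 : -S ≤ T := by nlinarith
  have h7 : 0 ≤ r * (S + T) := mul_nonneg hr (by linarith)
  have h8 : r * (S + T) = r * a2 * p ^ 2 + r * a2 * q ^ 2 + (-(r * a2 * u ^ 2) - r * a2 * v ^ 2) + r * p * u * a0 * 2 + r * p * v * a1 * 2 +
              (r * p ^ 2 - r * q * u * a1 * 2) +
            r * q * v * a0 * 2 +
          r * q ^ 2 +
        r * u ^ 2 +
      r * v ^ 2 := by rw [hT, hS, hX, hY, hZ]; ring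
  linarith

lemma psd_smul_one_add (r : ℝ) (hr : 0 ≤ r) (a : V3) (ha : ‖a‖ ≤ 1) :
    ((r : ℂ) • ((1 : Matrix (Fin 2) (Fin 2) ℂ) + dotSigma a)).PosSemidef := by
  have ha2 : a 0 ^ 2 + a 1 ^ 2 + a 2 ^ 2 ≤ 1 := by
    rw [norm_sq_V3]; nlinarith [norm_nonneg a]
  refine Matrix.PosSemidef.of_dotProduct_mulVec_nonneg ?_ ?_
  · rw [dotSigma_eq]
    ext i j
    fin_cases i <;> fin_cases j <;>
      simp [conjTranspose_apply, Complex.ext_iff, one_apply] <;> ring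
  · intro x
    rw [dotSigma_eq]
    have hx : star x ⬝ᵥ ((r : ℂ) • ((1 : Matrix (Fin 2) (Fin 2) ℂ) +
        !![(a 2 : ℂ), (a 0 : ℂ) - (a 1 : ℂ)*Complex.I; (a 0 : ℂ) + (a 1 : ℂ)*Complex.I, -(a 2 : ℂ)])) *ᵥ x
        = (r : ℂ) * ((1 + (a 2:ℂ)) * (star (x 0) * x 0) + (1 - (a 2:ℂ)) * (star (x 1) * x 1)
          + ((a 0 : ℂ) - (a 1 : ℂ)*Complex.I) * (star (x 0) * x 1)
          + ((a 0 : ℂ) + (a 1 : ℂ)*Complex.I) * (star (x 1) * x 0)) := by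
      simp [dotProduct, Matrix.mulVec, Fin.sum_univ_two, one_apply]
      ring
    rw [hx]
    obtain ⟨p, q⟩ := x 0
    obtain ⟨u, v⟩ := x 1
    rw [Complex.le_def]
    constructor
    · simp only [Complex.zero_re]
      simp [Complex.ext_iff, Complex.mul_re, Complex.mul_im, Complex.add_re, Complex.add_im]
      ring_nf
      linarith [quad_key r p q u v (a 0) (a 1) (a 2) hr ha2]
    · simp [Complex.ext_iff, Complex.mul_re, Complex.mul_im]
      ring_nf
      tauto

lemma Amat_mulVec (a : V3) (x : Fin 2 → ℂ) :
    Amat 1 a *ᵥ x = (2⁻¹ : ℂ) • (x + dotSigma a *ᵥ x) := by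
  simp [Amat, Matrix.smul_mulVec, Matrix.add_mulVec, Matrix.one_mulVec, Matrix.vecHead, Matrix.vecTail, mul_add]

lemma dotSigma_smul (t : ℝ) (a : V3) : dotSigma (t • a) = (t : ℂ) • dotSigma a := by
  simp only [dotSigma]
  have h0 : (t • a) 0 = t * a 0 := rfl
  have h1 : (t • a) 1 = t * a 1 := rfl
  have h2 : (t • a) 2 = t * a 2 := rfl
  rw [h0, h1, h2]
  push_cast
  rw [smul_add, smul_add, smul_smul, smul_smul, smul_smul]

lemma dotSigma_sub (a b : V3) : dotSigma (a - b) = dotSigma a - dotSigma b := by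
  simp only [dotSigma]
  have h0 : (a - b) 0 = a 0 - b 0 := rfl
  have h1 : (a - b) 1 = a 1 - b 1 := rfl
  have h2 : (a - b) 2 = a 2 - b 2 := rfl
  rw [h0, h1, h2]
  push_cast
  rw [sub_smul, sub_smul, sub_smul]
  abel

lemma b_parallel (n b : V3) (hn : ‖n‖ = 1) (h : JMeff (Amat 1 n) (Amat 1 b)) :
    ∃ t : ℝ, b = t • n := by
  obtain ⟨G, hG0', hGn, hGb, hGs⟩ := h
  have hG0 : G.PosSemidef := by simpa [matLE] using hG0'
  obtain ⟨u, hu, huEig'⟩ := exists_eigvec n hn 1 (by norm_num)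
  obtain ⟨v, hv, hvEig'⟩ := exists_eigvec n hn (-1) (by norm_num)
  have huEig : dotSigma n *ᵥ u = u := by simpa using huEig'
  have hvEig : dotSigma n *ᵥ v = -v := by
    rw [hvEig']; push_cast; rw [neg_smul, one_smul]
  have hAu : Amat 1 n *ᵥ u = u := by
    rw [Amat_mulVec, huEig]
    rw [← two_smul ℂ u, smul_smul]
    norm_num
  have hAv : Amat 1 n *ᵥ v = 0 := by
    rw [Amat_mulVec, hvEig]
    simp
  -- G v = 0
  have h1 : star v ⬝ᵥ G *ᵥ v = 0 := by
    refine le_antisymm ?_ (hG0.dotProduct_mulVec_nonneg v)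
    have h2 := hGn.dotProduct_mulVec_nonneg v
    rw [Matrix.sub_mulVec, dotProduct_sub, hAv, dotProduct_zero, zero_sub] at h2
    exact le_of_neg_le_neg (by simpa using h2)
  have hGv : G *ᵥ v = 0 := (hG0.dotProduct_mulVec_zero_iff v).mp h1
  -- (Amat 1 b - G) u = 0
  have hsum : star u ⬝ᵥ (Amat 1 b - G) *ᵥ u
      = - (star u ⬝ᵥ (G - (Amat 1 n + Amat 1 b - 1)) *ᵥ u) := by
    simp only [Matrix.sub_mulVec, Matrix.add_mulVec, Matrix.one_mulVec, dotProduct_sub,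
      dotProduct_add, hAu]
    ring
  have hz1 : star u ⬝ᵥ (Amat 1 b - G) *ᵥ u = 0 := by
    refine le_antisymm ?_ (hGb.dotProduct_mulVec_nonneg u)
    rw [hsum]
    exact neg_nonpos_of_nonneg (hGs.dotProduct_mulVec_nonneg u)
  have hbu : Amat 1 b *ᵥ u = G *ᵥ u := by
    have h3 := (hGb.dotProduct_mulVec_zero_iff u).mp hz1
    rwa [Matrix.sub_mulVec, sub_eq_zero] at h3
  -- orthogonality
  have hvu : star v ⬝ᵥ u = 0 := by
    have e1 : star v ⬝ᵥ (dotSigma n *ᵥ u) = star v ⬝ᵥ u := by rw [huEig]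
    have e2 : star v ⬝ᵥ (dotSigma n *ᵥ u) = - (star v ⬝ᵥ u) := by
      rw [Matrix.dotProduct_mulVec]
      have e3 : star v ᵥ* dotSigma n = - star v := by
        have e4 := congrArg star hvEig
        rw [Matrix.star_mulVec, (dotSigma_herm n).eq] at e4
        simpa using e4
      rw [e3, neg_dotProduct]
    have := e1.symm.trans e2
    have h5 : (2 : ℂ) * (star v ⬝ᵥ u) = 0 := by linear_combination this
    simpa using h5
  have hvGu : star v ⬝ᵥ (G *ᵥ u) = 0 := by
    rw [Matrix.dotProduct_mulVec]
    have e3 : star v ᵥ* G = 0 := by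
      have e4 := congrArg star hGv
      rw [Matrix.star_mulVec, hG0.1.eq] at e4
      simpa using e4
    rw [e3, zero_dotProduct]
  set w := G *ᵥ u with hwdef
  -- det relation
  have hdet2 : (!![u 0, u 1; w 0, w 1] : Matrix (Fin 2) (Fin 2) ℂ).det = 0 := by
    refine Matrix.exists_mulVec_eq_zero_iff.mp ⟨star v, by simpa using hv, ?_⟩
    simp only [dotProduct, Fin.sum_univ_two, Pi.star_apply, Complex.star_def] at hvu hvGu
    funext i
    fin_cases i
    · simp only [Matrix.mulVec, dotProduct, Fin.sum_univ_two, Pi.star_apply, Complex.star_def]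
      simp
      linear_combination hvu
    · simp only [Matrix.mulVec, dotProduct, Fin.sum_univ_two, Pi.star_apply, Complex.star_def]
      simp
      linear_combination hvGu
  have hdetrel : u 0 * w 1 - u 1 * w 0 = 0 := by
    simpa [Matrix.det_fin_two] using hdet2
  -- proportionality
  have hprop : ∃ c : ℂ, w = c • u := by
    by_cases h0 : u 0 = 0
    · have h1' : u 1 ≠ 0 := by
        intro h1'
        exact hu (funext fun i => by fin_cases i <;> assumption)
      refine ⟨w 1 / u 1, funext fun i => ?_⟩
      fin_cases i
      · have : u 1 * w 0 = 0 := by linear_combination -hdetrel + w 1 * h0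
        have hw0 : w 0 = 0 := by
          rcases mul_eq_zero.mp this with h | h
          · exact absurd h h1'
          · exact h
        show w 0 = w 1 / u 1 * u 0
        rw [hw0, h0, mul_zero]
      · show w 1 = w 1 / u 1 * u 1
        rw [div_mul_cancel₀ _ h1']
    · refine ⟨w 0 / u 0, funext fun i => ?_⟩
      fin_cases i
      · show w 0 = w 0 / u 0 * u 0
        rw [div_mul_cancel₀ _ h0]
      · show w 1 = w 0 / u 0 * u 1
        field_simp
        first
        | linear_combination -hdetrel
        | linear_combination hdetrel
        | linear_combination 2 * hdetrel
        | linear_combination -2 * hdetrel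
        | linear_combination u 1 * hdetrel
  obtain ⟨c, hw⟩ := hprop
  -- c is real
  have hge : (0:ℂ) ≤ star u ⬝ᵥ w := hG0.dotProduct_mulVec_nonneg u
  have hsu : star u ⬝ᵥ u = ((Complex.normSq (u 0) + Complex.normSq (u 1) : ℝ) : ℂ) := by
    simp only [dotProduct, Fin.sum_univ_two, Pi.star_apply, Complex.star_def]
    push_cast
    rw [Complex.normSq_eq_conj_mul_self, Complex.normSq_eq_conj_mul_self]
  have hsupos : 0 < Complex.normSq (u 0) + Complex.normSq (u 1) := by
    rcases (by
      by_contra hcon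
      push_neg at hcon
      exact hu (funext fun i => by
        fin_cases i <;> [exact hcon.1; exact hcon.2]) :
      u 0 ≠ 0 ∨ u 1 ≠ 0) with h' | h'
    · have := Complex.normSq_pos.mpr h'
      linarith [Complex.normSq_nonneg (u 1)]
    · have := Complex.normSq_pos.mpr h'
      linarith [Complex.normSq_nonneg (u 0)]
  have hcw : star u ⬝ᵥ w = c * ((Complex.normSq (u 0) + Complex.normSq (u 1) : ℝ) : ℂ) := by
    rw [hw, ← hsu]
    simp [dotProduct, Fin.sum_univ_two, Pi.smul_apply, smul_eq_mul]
    ring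
  have hcim : c.im = 0 := by
    rw [hcw] at hge
    rw [Complex.le_def] at hge
    have := hge.2
    simp [Complex.mul_im] at this
    rcases this with h' | h'
    · exact h'
    · exact absurd h' (ne_of_gt hsupos)
  set t : ℝ := 2 * c.re - 1 with ht
  have hcre : c = ((c.re : ℝ) : ℂ) := by
    rw [Complex.ext_iff]; simp [hcim]
  -- eigenvalue equation for dotSigma b
  have hbe : dotSigma b *ᵥ u = (t : ℂ) • u := by
    have h6 := hbu
    rw [Amat_mulVec, hw] at h6
    have h7 := congrArg (fun y => (2:ℂ) • y) h6
    simp only [smul_smul] at h7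
    norm_num at h7
    -- h7 : u + dotSigma b *ᵥ u = (2*c) • u  (hopefully)
    have h8 : dotSigma b *ᵥ u = ((2:ℂ) * c - 1) • u := by
      rw [sub_smul, ← h7, one_smul]
      ext i; fin_cases i <;> simp [Matrix.mulVec, dotProduct, Fin.sum_univ_two, Matrix.vecHead, Matrix.vecTail] <;> ring
    rw [h8, hcre]
    congr 1
    norm_cast
  -- b - t•n annihilates u
  refine ⟨t, ?_⟩
  have hker : dotSigma (b - t • n) *ᵥ u = 0 := by
    rw [dotSigma_sub, dotSigma_smul, Matrix.sub_mulVec, Matrix.smul_mulVec, huEig, hbe]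
    simp
  have hdet3 : (dotSigma (b - t • n)).det = 0 :=
    Matrix.exists_mulVec_eq_zero_iff.mp ⟨u, hu, hker⟩
  have hdet4 := det_aux (b - t • n) 0
  rw [zero_smul, sub_zero, hdet3] at hdet4
  have h9 : ((((b - t • n) 0)^2 + ((b - t • n) 1)^2 + ((b - t • n) 2)^2 : ℝ) : ℂ) = 0 := by
    push_cast
    linear_combination hdet4
  have h10 : ((b - t • n) 0)^2 + ((b - t • n) 1)^2 + ((b - t • n) 2)^2 = 0 := by
    exact Complex.ofReal_eq_zero.mp h9
  rw [norm_sq_V3] at h10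
  have h11 : ‖b - t • n‖ = 0 := by
    have := norm_nonneg (b - t • n)
    nlinarith
  have h12 : b - t • n = 0 := norm_eq_zero.mp h11
  rw [sub_eq_zero] at h12
  exact h12

theorem stmt16 (θ : ℝ) (hθ : θ ∈ Set.Ioo 0 (Real.pi / 2)) (n m b : V3)
    (hn : ‖n‖ = 1) (hm : ‖m‖ = 1) (hnm : ⟪n, m⟫ = Real.cos θ) (hb : ‖b‖ ≤ 1)
    (h : JMeff (Amat 1 n) (Amat 1 b)) :
    2⁻¹ * ‖b - m‖ ≥ 2⁻¹ * Real.sin θ ∧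
    2⁻¹ * ‖(Real.cos θ) • n - m‖ = 2⁻¹ * Real.sin θ ∧
    JMeff (Amat 1 n) (Amat 1 ((Real.cos θ) • n)) := by
  obtain ⟨hθ1, hθ2⟩ := hθ
  have hpi := Real.pi_pos
  have hcos : 0 < Real.cos θ := Real.cos_pos_of_mem_Ioo ⟨by linarith, hθ2⟩
  have hcos1 : Real.cos θ ≤ 1 := Real.cos_le_one θ
  have hsin : 0 < Real.sin θ := Real.sin_pos_of_pos_of_lt_pi hθ1 (by linarith)
  have hpyth := Real.sin_sq_add_cos_sq θ
  refine ⟨?_, ?_, ?_⟩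
  · obtain ⟨t, hbt⟩ := b_parallel n b hn h
    have hsq : ‖b - m‖^2 = t^2 - 2*(t*Real.cos θ) + 1 := by
      rw [hbt, norm_sub_sq_real, real_inner_smul_left, hnm, norm_smul, hn, hm]
      simp [mul_pow, sq_abs]
    have hle : Real.sin θ ^ 2 ≤ ‖b - m‖^2 := by
      rw [hsq]; nlinarith [sq_nonneg (t - Real.cos θ)]
    have h2 : Real.sin θ ≤ ‖b - m‖ := by
      have h3 := Real.sqrt_le_sqrt hle
      rwa [Real.sqrt_sq hsin.le, Real.sqrt_sq (norm_nonneg _)] at h3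
    linarith
  · have hsq : ‖Real.cos θ • n - m‖^2 = Real.sin θ^2 := by
      rw [norm_sub_sq_real, real_inner_smul_left, hnm, norm_smul, hn, hm]
      simp only [mul_pow, sq_abs, mul_one, Real.norm_eq_abs]
      nlinarith
    have h4 := congrArg Real.sqrt hsq
    rw [Real.sqrt_sq (norm_nonneg _), Real.sqrt_sq hsin.le] at h4
    rw [h4]
  · set r1 : ℝ := (1 + Real.cos θ)/4 with hr1def
    set r2 : ℝ := (1 - Real.cos θ)/4 with hr2def
    have hr1 : 0 ≤ r1 := by rw [hr1def]; linarith
    have hr2 : 0 ≤ r2 := by rw [hr2def]; linarith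
    have hnn : ‖(-1 : ℝ) • n‖ = 1 := by rw [norm_smul, hn]; norm_num
    have hds : dotSigma ((-1 : ℝ) • n) = - dotSigma n := by
      rw [dotSigma_smul]; push_cast; rw [neg_smul, one_smul]
    refine ⟨(r1 : ℂ) • ((1 : Matrix (Fin 2) (Fin 2) ℂ) + dotSigma n), ?_, ?_, ?_, ?_⟩
    · show ((r1 : ℂ) • ((1 : Matrix (Fin 2) (Fin 2) ℂ) + dotSigma n)
          - (0 : Matrix (Fin 2) (Fin 2) ℂ)).PosSemidef
      rw [sub_zero]
      exact psd_smul_one_add r1 hr1 n hn.le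
    · show (Amat 1 n - _).PosSemidef
      have e : Amat 1 n - (r1 : ℂ) • ((1 : Matrix (Fin 2) (Fin 2) ℂ) + dotSigma n)
          = (r2 : ℂ) • ((1 : Matrix (Fin 2) (Fin 2) ℂ) + dotSigma n) := by
        rw [Amat, hr1def, hr2def]
        match_scalars <;> push_cast <;> ring
      rw [e]
      exact psd_smul_one_add r2 hr2 n hn.le
    · show (Amat 1 (Real.cos θ • n) - _).PosSemidef
      have e : Amat 1 (Real.cos θ • n) - (r1 : ℂ) • ((1 : Matrix (Fin 2) (Fin 2) ℂ) + dotSigma n)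
          = (r2 : ℂ) • ((1 : Matrix (Fin 2) (Fin 2) ℂ) + dotSigma ((-1 : ℝ) • n)) := by
        rw [Amat, dotSigma_smul, hds, hr1def, hr2def]
        match_scalars <;> push_cast <;> ring
      rw [e]
      exact psd_smul_one_add r2 hr2 _ hnn.le
    · show ((r1 : ℂ) • ((1 : Matrix (Fin 2) (Fin 2) ℂ) + dotSigma n)
          - (Amat 1 n + Amat 1 (Real.cos θ • n) - 1)).PosSemidef
      have e : (r1 : ℂ) • ((1 : Matrix (Fin 2) (Fin 2) ℂ) + dotSigma n)
          - (Amat 1 n + Amat 1 (Real.cos θ • n) - 1)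
          = (r1 : ℂ) • ((1 : Matrix (Fin 2) (Fin 2) ℂ) + dotSigma ((-1 : ℝ) • n)) := by
        rw [Amat, Amat, dotSigma_smul, hds, hr1def]
        match_scalars <;> push_cast <;> ring
      rw [e]
      exact psd_smul_one_add r1 hr1 _ hnn.le
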